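/- Let X be a second countable space, U ⊆ X open, σ : U → X a local homeomorphism, and μ a Borel measure on X. If E ⊆ U is Borel and E = ⊔ᵢ Eᵢ = ⊔ⱼ Fⱼ are two countable partitions into Borel sets on each of which σ is injective, then ∑ᵢ μ(σ(Eᵢ)) = ∑ⱼ μ(σ(Fⱼ)). Hence the measure μ⊙σ defined by μ⊙σ(E) := ∑ᵢ μ(σ(Eᵢ)) is well defined. -/

import Mathlib

open MeasureTheory

lemma measurableSet_image_of_localHomeo {X : Type*} [TopologicalSpace X]
    [SecondCountableTopology X] [MeasurableSpace X] [BorelSpace X]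
    {U : Set X} {σ : X → X} (hσ : IsLocalHomeomorphOn σ U)
    {A : Set X} (hA : MeasurableSet A) (hAU : A ⊆ U) : MeasurableSet (σ '' A) := by
  choose e hmem heq using hσ
  have hcov := TopologicalSpace.isOpen_iUnion_countable
    (fun u : U => (e u u.2).source) (fun u => (e u u.2).open_source)
  obtain ⟨T, hTc, hT⟩ := hcov
  have hAsub : A ⊆ ⋃ u ∈ T, (e u u.2).source := by
    rw [hT]
    intro x hx
    exact Set.mem_iUnion.2 ⟨⟨x, hAU hx⟩, hmem x (hAU hx)⟩
  have himg : σ '' A = ⋃ u ∈ T, σ '' (A ∩ (e u u.2).source) := by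
    apply Set.Subset.antisymm
    · rintro _ ⟨x, hx, rfl⟩
      obtain ⟨u, huT, hu⟩ := Set.mem_iUnion₂.1 (hAsub hx)
      exact Set.mem_iUnion₂.2 ⟨u, huT, ⟨x, ⟨hx, hu⟩, rfl⟩⟩
    · exact Set.iUnion₂_subset fun u _ => Set.image_mono Set.inter_subset_left
  rw [himg]
  refine MeasurableSet.biUnion hTc fun u _ => ?_
  have h1 : σ '' (A ∩ (e u u.2).source) =
      ((e u u.2).source.restrict ⇑(e u u.2)) '' (Subtype.val ⁻¹' A) := by
    rw [← heq u u.2]; exact (Set.image_domRestrict _ _ _).symm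
  rw [h1]
  exact ((e u u.2).isOpenEmbedding_restrict.measurableEmbedding).measurableSet_image.2
    (hA.preimage measurable_subtype_coe)

/-- Well-definedness of the measure `μ ⊙ σ`: if `X` is locally compact Hausdorff second
countable, `U ⊆ X` is open, `σ` is a local homeomorphism on `U` and `μ` a Borel measure,
then any two countable Borel partitions of a Borel set `E ⊆ U` into pieces on which `σ`
is injective give the same value `∑ᵢ μ(σ(Eᵢ)) = ∑ⱼ μ(σ(Fⱼ))`. -/
theorem stmt4 {X : Type*} [TopologicalSpace X] [LocallyCompactSpace X] [T2Space X]
    [SecondCountableTopology X] [MeasurableSpace X] [BorelSpace X]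
    (U : Set X) (hU : IsOpen U) (σ : X → X) (hσ : IsLocalHomeomorphOn σ U)
    (μ : Measure X) (E : Set X) (hEU : E ⊆ U) (hE : MeasurableSet E)
    (Ei Fj : ℕ → Set X)
    (hEim : ∀ i, MeasurableSet (Ei i)) (hFjm : ∀ j, MeasurableSet (Fj j))
    (hEid : Pairwise fun i j => Disjoint (Ei i) (Ei j))
    (hFjd : Pairwise fun i j => Disjoint (Fj i) (Fj j))
    (hEiU : (⋃ i, Ei i) = E) (hFjU : (⋃ j, Fj j) = E)
    (hEiInj : ∀ i, Set.InjOn σ (Ei i)) (hFjInj : ∀ j, Set.InjOn σ (Fj j)) :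
    ∑' i, μ (σ '' Ei i) = ∑' j, μ (σ '' Fj j) := by
  have key : ∀ (A B : ℕ → Set X), (∀ i, MeasurableSet (A i)) → (∀ j, MeasurableSet (B j)) →
      (Pairwise fun i j => Disjoint (B i) (B j)) →
      (∀ i, Set.InjOn σ (A i)) → (∀ i, A i ⊆ ⋃ j, B j) → (∀ i, A i ⊆ U) →
      ∑' i, μ (σ '' A i) = ∑' i, ∑' j, μ (σ '' (A i ∩ B j)) := by
    intro A B hAm hBm hBd hAinj hAB hAU
    refine tsum_congr fun i => ?_
    have hdecomp : σ '' A i = ⋃ j, σ '' (A i ∩ B j) := by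
      rw [← Set.image_iUnion, ← Set.inter_iUnion,
        Set.inter_eq_left.2 (hAB i)]
    rw [hdecomp, measure_iUnion]
    · intro j k hjk
      rw [Function.onFun, Set.disjoint_left]
      rintro _ ⟨a, ⟨haA, haB⟩, rfl⟩ ⟨b, ⟨hbA, hbB⟩, hab⟩
      have hab' : a = b := hAinj i haA hbA hab.symm
      subst hab'
      exact (hBd hjk).le_bot ⟨haB, hbB⟩
    · intro j
      exact measurableSet_image_of_localHomeo hσ ((hAm i).inter (hBm j))
        (fun x hx => hAU i hx.1)
  have hEsub : ∀ i, Ei i ⊆ E := fun i => hEiU ▸ Set.subset_iUnion Ei i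
  have hFsub : ∀ j, Fj j ⊆ E := fun j => hFjU ▸ Set.subset_iUnion Fj j
  rw [key Ei Fj hEim hFjm hFjd hEiInj (fun i => hFjU ▸ hEsub i) (fun i => (hEsub i).trans hEU),
    key Fj Ei hFjm hEim hEid hFjInj (fun j => hEiU ▸ hFsub j) (fun j => (hFsub j).trans hEU),
    ENNReal.tsum_comm]
  congr 1
  ext j
  congr 1
  ext i
  rw [Set.inter_comm]
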